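/- arXiv:0902.1932 — 3 statements merged into one kernel-verified Lean document; each statement's English description precedes it below -/
import Mathlib

section
/- Let c = (c_1, …, c_m) be a cardinality sequence and let F ⊆ E with c_p < r(F) < c_{p+1} for some p ∈ {1, …, m−1}. Then the rank induced forbidden set inequality associated with F is valid for every incidence vector of an independent set of feasible cardinality: for every independent set I of M with |I| ≤ c_p or |I| ≥ c_{p+1}, the vector χ^I satisfies (c_{p+1} − r(F))·χ^I(F) − (r(F) − c_p)·χ^I(E∖F) ≤ c_p·(c_{p+1} − r(F)). Consequently the inequality is valid for the cardinality constrained matroid polytope P^c(E). -/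
open Finset

/-- A (loopless) matroid on a finite ground set, given by its independent sets. -/
structure FinMatroid (α : Type*) [Fintype α] [DecidableEq α] where
  Indep : Finset α → Prop
  empty_indep : Indep ∅
  subset_indep : ∀ ⦃I J : Finset α⦄, Indep J → I ⊆ J → Indep I
  exchange : ∀ ⦃I J : Finset α⦄, Indep I → Indep J → I.card < J.card →
    ∃ e ∈ J \ I, Indep (insert e I)
  loopless : ∀ e : α, Indep {e}

variable {α : Type*} [Fintype α] [DecidableEq α]

open Classical in
/-- The rank of a set: the maximum cardinality of an independent subset. -/
noncomputable def FinMatroid.r (M : FinMatroid α) (F : Finset α) : ℕ :=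
  (F.powerset.filter M.Indep).sup Finset.card

/-- incidence vector -/
noncomputable def incVec (I : Finset α) : α → ℝ := fun e => if e ∈ I then 1 else 0

/-- x(S) = ∑_{e ∈ S} x_e -/
noncomputable def fsum (x : α → ℝ) (S : Finset α) : ℝ := ∑ e ∈ S, x e

/-- closed set -/
def FinMatroid.ClosedSet (M : FinMatroid α) (F : Finset α) : Prop :=
  ∀ e ∉ F, M.r F < M.r (insert e F)

/-- F is separable -/
def FinMatroid.Separable (M : FinMatroid α) (F : Finset α) : Prop :=
  ∃ F₁ F₂ : Finset α, F₁ ≠ ∅ ∧ F₂ ≠ ∅ ∧ Disjoint F₁ F₂ ∧ F₁ ∪ F₂ = F ∧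
    M.r F₁ + M.r F₂ ≤ M.r F

def FinMatroid.Inseparable (M : FinMatroid α) (F : Finset α) : Prop :=
  ¬ M.Separable F

/-- the k-rank r^k(F) = k - r(E \ F), as an integer -/
noncomputable def FinMatroid.krank (M : FinMatroid α) (k : ℕ) (F : Finset α) : ℤ :=
  (k : ℤ) - (M.r Fᶜ : ℤ)

/-- F is k-separable -/
noncomputable def FinMatroid.kSeparable (M : FinMatroid α) (k : ℕ) (F : Finset α) : Prop :=
  ∃ F₁ F₂ : Finset α, F₁ ≠ ∅ ∧ F₂ ≠ ∅ ∧ Disjoint F₁ F₂ ∧ F₁ ∪ F₂ = F ∧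
    M.krank k F₁ + M.krank k F₂ = M.krank k F

noncomputable def FinMatroid.kInseparable (M : FinMatroid α) (k : ℕ) (F : Finset α) : Prop :=
  ¬ M.kSeparable k F

/-- convex hull of incidence vectors of independent sets of cardinality exactly k -/
noncomputable def exactPolytope (M : FinMatroid α) (k : ℕ) : Set (α → ℝ) :=
  convexHull ℝ {x | ∃ I : Finset α, M.Indep I ∧ I.card = k ∧ x = incVec I}

/-- the cardinality constrained matroid polytope P^c(E) -/
noncomputable def cardPolytope (M : FinMatroid α) {m : ℕ} (c : Fin m → ℕ) : Set (α → ℝ) :=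
  convexHull ℝ {x | ∃ I : Finset α, M.Indep I ∧ (∃ p : Fin m, I.card = c p) ∧ x = incVec I}

/-- dimension of (the affine hull of) a subset of ℝ^E -/
noncomputable def polyDim (s : Set (α → ℝ)) : ℕ :=
  Module.finrank ℝ (affineSpan ℝ s).direction

/-- `a · x ≤ a₀` defines a facet of `P` -/
noncomputable def IsFacet (P : Set (α → ℝ)) (a : α → ℝ) (a₀ : ℝ) : Prop :=
  (∀ x ∈ P, ∑ e, a e * x e ≤ a₀) ∧
  polyDim {x ∈ P | ∑ e, a e * x e = a₀} + 1 = polyDim P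



lemma fsum_incVec (I S : Finset α) : fsum (incVec I) S = ((S ∩ I).card : ℝ) := by
  classical
  simp [fsum, incVec, Finset.sum_boole, Finset.filter_mem_eq_inter]

lemma card_inter_le_r (M : FinMatroid α) {I : Finset α} (F : Finset α) (hI : M.Indep I) :
    (F ∩ I).card ≤ M.r F := by
  classical
  apply Finset.le_sup (f := Finset.card)
  simp only [Finset.mem_filter, Finset.mem_powerset]
  exact ⟨Finset.inter_subset_left, M.subset_indep hI Finset.inter_subset_right⟩

/-- validity of the rank induced forbidden set inequality. -/
theorem forbidden_set_inequality_valid {α : Type*} [Fintype α] [DecidableEq α]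
    (M : FinMatroid α)
    {m : ℕ} (c : Fin m → ℕ) (hm : 2 ≤ m) (hmono : StrictMono c)
    (hlast : c ⟨m - 1, by omega⟩ ≤ M.r Finset.univ)
    (F : Finset α) (p : Fin m) (hp : p.val + 1 < m)
    (h1 : c p < M.r F) (h2 : M.r F < c ⟨p.val + 1, hp⟩) :
    (∀ I : Finset α, M.Indep I → (I.card ≤ c p ∨ c ⟨p.val + 1, hp⟩ ≤ I.card) →
      ((c ⟨p.val + 1, hp⟩ : ℝ) - M.r F) * fsum (incVec I) F - ((M.r F : ℝ) - c p) * fsum (incVec I) Fᶜ ≤ (c p : ℝ) * ((c ⟨p.val + 1, hp⟩ : ℝ) - M.r F)) ∧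
    (∀ x ∈ cardPolytope M c, ((c ⟨p.val + 1, hp⟩ : ℝ) - M.r F) * fsum x F - ((M.r F : ℝ) - c p) * fsum x Fᶜ ≤ (c p : ℝ) * ((c ⟨p.val + 1, hp⟩ : ℝ) - M.r F)) := by
  classical
  have hc12 : (c p : ℝ) < c ⟨p.val + 1, hp⟩ := by
    exact_mod_cast hmono (show p < ⟨p.val+1, hp⟩ by simp [Fin.lt_def])
  have key : ∀ I : Finset α, M.Indep I → (I.card ≤ c p ∨ c ⟨p.val + 1, hp⟩ ≤ I.card) →
      ((c ⟨p.val + 1, hp⟩ : ℝ) - M.r F) * fsum (incVec I) F - ((M.r F : ℝ) - c p) * fsum (incVec I) Fᶜ ≤ (c p : ℝ) * ((c ⟨p.val + 1, hp⟩ : ℝ) - M.r F) := by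
    intro I hI hcard
    rw [fsum_incVec, fsum_incVec]
    have ha : (F ∩ I).card ≤ M.r F := card_inter_le_r M F hI
    have hsplit : (I ∩ F).card + (I \ F).card = I.card := Finset.card_inter_add_card_sdiff I F
    have h1' : (c p : ℝ) < M.r F := by exact_mod_cast h1
    have h2' : (M.r F : ℝ) < c ⟨p.val + 1, hp⟩ := by exact_mod_cast h2
    have ha' : ((F ∩ I).card : ℝ) ≤ M.r F := by exact_mod_cast ha
    have hc : Fᶜ ∩ I = I \ F := by
      ext e; simp [Finset.mem_sdiff, and_comm]
    rw [hc]
    have hFI : (F ∩ I).card = (I ∩ F).card := by rw [Finset.inter_comm]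
    have hsplit' : ((F ∩ I).card : ℝ) + ((I \ F).card : ℝ) = I.card := by
      rw [hFI]; exact_mod_cast hsplit
    rcases hcard with h | h
    · have h' : (I.card : ℝ) ≤ c p := by exact_mod_cast h
      nlinarith [(by positivity : (0:ℝ) ≤ ((I \ F).card : ℝ))]
    · have h' : (c ⟨p.val + 1, hp⟩ : ℝ) ≤ I.card := by exact_mod_cast h
      nlinarith [(by positivity : (0:ℝ) ≤ ((I \ F).card : ℝ))]
  refine ⟨key, ?_⟩
  intro x hx
  have hlin : IsLinearMap ℝ (fun x : α → ℝ =>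
      ((c ⟨p.val + 1, hp⟩ : ℝ) - M.r F) * fsum x F - ((M.r F : ℝ) - c p) * fsum x Fᶜ) := by
    constructor
    · intro u v
      simp only [fsum, Pi.add_apply, Finset.sum_add_distrib]
      ring
    · intro t u
      simp only [fsum, Pi.smul_apply, smul_eq_mul, ← Finset.mul_sum]
      ring
  have hconv : Convex ℝ {x : α → ℝ |
      ((c ⟨p.val + 1, hp⟩ : ℝ) - M.r F) * fsum x F - ((M.r F : ℝ) - c p) * fsum x Fᶜ ≤ (c p : ℝ) * ((c ⟨p.val + 1, hp⟩ : ℝ) - M.r F)} :=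
    convex_halfSpace_le hlin _
  refine convexHull_min ?_ hconv hx
  rintro y ⟨I, hI, ⟨q, hq⟩, rfl⟩
  apply key I hI
  rcases le_or_gt q.val p.val with hqp | hqp
  · left; rw [hq]; exact_mod_cast hmono.monotone (show q ≤ p from hqp)
  · right; rw [hq]; exact_mod_cast hmono.monotone (show (⟨p.val+1, hp⟩ : Fin m) ≤ q from hqp)
end

section
/- Let k be a natural number, let ∅ ≠ F ⊆ E, and suppose F̄ := E∖F is closed with r(F̄) < k < r(E). Let r_k(S) = min(r(S), k) be the rank function of the k-truncation of M and define r_k^k(S) := k − r_k(E∖S) for S ⊆ E. Then F is k-inseparable with respect to r_k: for every partition F = F_1 ∪̇ F_2 with F_1 and F_2 nonempty, r_k^k(F_1) + r_k^k(F_2) < r_k^k(F). -/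
open Finset

variable {α : Type*} [Fintype α] [DecidableEq α]

namespace FinMatroid

open Classical in
lemma card_le_r (M : FinMatroid α) {I F : Finset α} (hI : M.Indep I) (hIF : I ⊆ F) :
    I.card ≤ M.r F :=
  Finset.le_sup (by simp [Finset.mem_filter, Finset.mem_powerset, hIF, hI])

open Classical in
lemma exists_basis (M : FinMatroid α) (F : Finset α) :
    ∃ I, I ⊆ F ∧ M.Indep I ∧ I.card = M.r F := by
  have hne : (F.powerset.filter M.Indep).Nonempty :=
    ⟨∅, by simp [Finset.mem_filter, M.empty_indep]⟩
  obtain ⟨I, hI, hcard⟩ := Finset.exists_mem_eq_sup _ hne Finset.card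
  simp only [Finset.mem_filter, Finset.mem_powerset] at hI
  exact ⟨I, hI.1, hI.2, hcard.symm⟩

lemma r_mono (M : FinMatroid α) {A B : Finset α} (h : A ⊆ B) : M.r A ≤ M.r B := by
  obtain ⟨I, hIA, hI, hIc⟩ := M.exists_basis A
  rw [← hIc]
  exact M.card_le_r hI (hIA.trans h)

lemma exists_superset_basis (M : FinMatroid α) {F : Finset α} :
    ∀ n {I : Finset α}, M.r F ≤ I.card + n → M.Indep I → I ⊆ F →
      ∃ J, I ⊆ J ∧ J ⊆ F ∧ M.Indep J ∧ J.card = M.r F := by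
  intro n
  induction n with
  | zero =>
    intro I h hI hIF
    exact ⟨I, Finset.Subset.refl I, hIF, hI,
      le_antisymm (M.card_le_r hI hIF) (by simpa using h)⟩
  | succ n ih =>
    intro I h hI hIF
    by_cases hc : M.r F ≤ I.card + n
    · exact ih hc hI hIF
    · obtain ⟨B, hBF, hB, hBcard⟩ := M.exists_basis F
      have hlt : I.card < B.card := by omega
      obtain ⟨e, he, hins⟩ := M.exchange hI hB hlt
      have heI : e ∉ I := (Finset.mem_sdiff.mp he).2
      have heF : e ∈ F := hBF (Finset.mem_sdiff.mp he).1
      obtain ⟨J, hJ1, hJ2, hJ3, hJ4⟩ :=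
        ih (I := insert e I) (by rw [Finset.card_insert_of_notMem heI]; omega) hins
          (Finset.insert_subset heF hIF)
      exact ⟨J, (Finset.subset_insert e I).trans hJ1, hJ2, hJ3, hJ4⟩

lemma r_submod (M : FinMatroid α) (A B : Finset α) :
    M.r (A ∪ B) + M.r (A ∩ B) ≤ M.r A + M.r B := by
  obtain ⟨I, hIsub, hI, hIcard⟩ := M.exists_basis (A ∩ B)
  obtain ⟨J, hIJ, hJsub, hJ, hJcard⟩ :=
    M.exists_superset_basis (F := A ∪ B) (M.r (A ∪ B)) (by omega) hI
      (hIsub.trans (Finset.inter_subset_left.trans Finset.subset_union_left))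
  have h1 : (J ∩ A).card ≤ M.r A :=
    M.card_le_r (M.subset_indep hJ Finset.inter_subset_left) Finset.inter_subset_right
  have h2 : (J ∩ B).card ≤ M.r B :=
    M.card_le_r (M.subset_indep hJ Finset.inter_subset_left) Finset.inter_subset_right
  have h3 : M.r (A ∩ B) ≤ (J ∩ (A ∩ B)).card := by
    rw [← hIcard]
    exact Finset.card_le_card (Finset.subset_inter hIJ hIsub)
  have h4 : (J ∩ A) ∪ (J ∩ B) = J := by
    rw [← Finset.inter_union_distrib_left]
    exact Finset.inter_eq_left.mpr hJsub
  have h5 : (J ∩ A) ∩ (J ∩ B) = J ∩ (A ∩ B) := by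
    ext x
    simp only [Finset.mem_inter]
    tauto
  have hcui := Finset.card_union_add_card_inter (J ∩ A) (J ∩ B)
  rw [h4, h5] at hcui
  omega

end FinMatroid

/-- if the complement of F is closed with r(E∖F) < k < r(E), then
F is k-inseparable with respect to the rank function of the k-truncation. -/
theorem kInseparable_of_compl_closed {α : Type*} [Fintype α] [DecidableEq α]
    (M : FinMatroid α) (k : ℕ) (F : Finset α) (hF : F ≠ ∅)
    (hclosed : M.ClosedSet Fᶜ) (h1 : M.r Fᶜ < k) (h2 : k < M.r Finset.univ) :
    ∀ F₁ F₂ : Finset α, F₁ ≠ ∅ → F₂ ≠ ∅ → Disjoint F₁ F₂ → F₁ ∪ F₂ = F →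
      ((k : ℤ) - (min (M.r F₁ᶜ) k : ℤ)) + ((k : ℤ) - (min (M.r F₂ᶜ) k : ℤ))
        < (k : ℤ) - (min (M.r Fᶜ) k : ℤ) := by
  intro F₁ F₂ h1ne h2ne hdisj hunion
  have hd : ∀ x, x ∈ F₁ → x ∉ F₂ := fun x hx => Finset.disjoint_left.mp hdisj hx
  have hcap : F₁ᶜ ∩ F₂ᶜ = Fᶜ := by
    subst hunion; ext x
    simp only [Finset.mem_inter, Finset.mem_compl, Finset.mem_union]
    tauto
  have hcup : F₁ᶜ ∪ F₂ᶜ = Finset.univ := by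
    ext x
    simp only [Finset.mem_union, Finset.mem_compl, Finset.mem_univ, iff_true]
    by_cases hx : x ∈ F₁
    · exact Or.inr (hd x hx)
    · exact Or.inl hx
  have hsub := M.r_submod F₁ᶜ F₂ᶜ
  rw [hcup, hcap] at hsub
  obtain ⟨e₁, he₁⟩ := Finset.nonempty_iff_ne_empty.mpr h1ne
  obtain ⟨e₂, he₂⟩ := Finset.nonempty_iff_ne_empty.mpr h2ne
  have he₁F : e₁ ∉ Fᶜ := by
    simp only [Finset.mem_compl, not_not, ← hunion]
    exact Finset.mem_union_left _ he₁
  have he₂F : e₂ ∉ Fᶜ := by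
    simp only [Finset.mem_compl, not_not, ← hunion]
    exact Finset.mem_union_right _ he₂
  have hlt2 : M.r Fᶜ < M.r F₂ᶜ := by
    refine lt_of_lt_of_le (hclosed e₁ he₁F) (M.r_mono ?_)
    refine Finset.insert_subset (Finset.mem_compl.mpr (hd e₁ he₁)) ?_
    intro x hx
    simp only [Finset.mem_compl, ← hunion, Finset.mem_union] at hx ⊢
    tauto
  have hlt1 : M.r Fᶜ < M.r F₁ᶜ := by
    refine lt_of_lt_of_le (hclosed e₂ he₂F) (M.r_mono ?_)
    refine Finset.insert_subset (Finset.mem_compl.mpr (fun hc => hd e₂ hc he₂)) ?_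
    intro x hx
    simp only [Finset.mem_compl, ← hunion, Finset.mem_union] at hx ⊢
    tauto
  omega
end

section
/- Let k be a natural number with 0 < k ≤ r(E). The polytope P^{(k)}(E) has dimension |E| − 1 (i.e., its affine hull has dimension |E| − 1) if and only if E is inseparable or k < r(E). -/
open Finset

variable {α : Type*} [Fintype α] [DecidableEq α]

/-! ### Auxiliary matroid lemmas -/

lemma FinMatroid.card_le_r_s8 (M : FinMatroid α) {I F : Finset α} (hIF : I ⊆ F)
    (hI : M.Indep I) : I.card ≤ M.r F := by
  classical
  exact Finset.le_sup (by simp [FinMatroid.r, Finset.mem_filter, Finset.mem_powerset, hIF, hI])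

lemma FinMatroid.exists_indep_r (M : FinMatroid α) (F : Finset α) :
    ∃ I, I ⊆ F ∧ M.Indep I ∧ I.card = M.r F := by
  classical
  have hne : (F.powerset.filter M.Indep).Nonempty :=
    ⟨∅, by simp [Finset.mem_filter, M.empty_indep]⟩
  obtain ⟨I, hI, hc⟩ := Finset.exists_mem_eq_sup _ hne Finset.card
  simp only [Finset.mem_filter, Finset.mem_powerset] at hI
  exact ⟨I, hI.1, hI.2, hc.symm⟩

/-- extension lemma: an independent set can be augmented from another independent set. -/
lemma FinMatroid.extend (M : FinMatroid α) {I J : Finset α} (hI : M.Indep I)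
    (hJ : M.Indep J) (h : I.card ≤ J.card) :
    ∃ K, M.Indep K ∧ I ⊆ K ∧ K ⊆ I ∪ J ∧ K.card = J.card := by
  obtain ⟨d, hd⟩ : ∃ d, J.card - I.card = d := ⟨_, rfl⟩
  induction d generalizing I with
  | zero => exact ⟨I, hI, le_refl I, Finset.subset_union_left, le_antisymm h (by omega)⟩
  | succ n ih =>
    have hlt : I.card < J.card := by omega
    obtain ⟨e, he, hIe⟩ := M.exchange hI hJ hlt
    rw [Finset.mem_sdiff] at he
    have hc : (insert e I).card = I.card + 1 := Finset.card_insert_of_notMem he.2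
    obtain ⟨K, h1, h2, h3, h4⟩ := ih hIe (by omega) (by omega)
    refine ⟨K, h1, (Finset.subset_insert e I).trans h2, h3.trans ?_, h4⟩
    intro x hx
    rcases Finset.mem_union.1 hx with hx | hx
    · rcases Finset.mem_insert.1 hx with rfl | hx
      · exact Finset.mem_union_right _ he.1
      · exact Finset.mem_union_left _ hx
    · exact Finset.mem_union_right _ hx

lemma FinMatroid.exists_indep_card (M : FinMatroid α) {k : ℕ} (hk : k ≤ M.r Finset.univ) :
    ∃ I, M.Indep I ∧ I.card = k := by
  obtain ⟨B, _, hB, hBc⟩ := M.exists_indep_r Finset.univ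
  obtain ⟨I, hIB, hIc⟩ := Finset.exists_subset_card_eq (s := B) (n := k) (by omega)
  exact ⟨I, M.subset_indep hB hIB, hIc⟩

lemma FinMatroid.extend_card (M : FinMatroid α) {I : Finset α} {k : ℕ} (hI : M.Indep I)
    (hIk : I.card ≤ k) (hk : k ≤ M.r Finset.univ) :
    ∃ K, M.Indep K ∧ I ⊆ K ∧ K.card = k := by
  obtain ⟨J, hJ, hJc⟩ := M.exists_indep_card hk
  obtain ⟨K, h1, h2, _, h4⟩ := M.extend hI hJ (by omega)
  exact ⟨K, h1, h2, by omega⟩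

/-- within an independent k-set, any valid functional is constant (when k < r). -/
lemma FinMatroid.const_within (M : FinMatroid α) {k : ℕ} (hkk : k < M.r Finset.univ)
    (a : α → ℝ)
    (hsum : ∀ I J : Finset α, M.Indep I → I.card = k → M.Indep J → J.card = k →
      ∑ e ∈ I, a e = ∑ e ∈ J, a e)
    {I : Finset α} (hI : M.Indep I) (hIc : I.card = k) :
    ∃ v, (∀ x ∈ I, a x = v) ∧ ∃ K, M.Indep K ∧ I ⊆ K ∧ K.card = k + 1 ∧ ∀ x ∈ K, a x = v := by
  obtain ⟨K, hK, hIK, hKc⟩ := M.extend_card (k := k+1) hI (by omega) (by omega)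
  obtain ⟨e, heK, heI⟩ : ∃ e ∈ K, e ∉ I := by
    by_contra h
    push_neg at h
    have hKI : K ⊆ I := fun x hx => h x hx
    have := Finset.card_le_card hKI
    omega
  have hKI : K = insert e I := by
    apply (Finset.eq_of_subset_of_card_le _ _).symm
    · intro x hx
      rcases Finset.mem_insert.1 hx with rfl | hx
      · exact heK
      · exact hIK hx
    · rw [Finset.card_insert_of_notMem heI]; omega
  have key : ∀ x ∈ I, a x = a e := by
    intro x hx
    have hxK : x ∈ K := hIK hx
    have hKx : M.Indep (K.erase x) := M.subset_indep hK (Finset.erase_subset _ _)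
    have hKxc : (K.erase x).card = k := by rw [Finset.card_erase_of_mem hxK]; omega
    have hs := hsum I (K.erase x) hI hIc hKx hKxc
    have h1 : ∑ y ∈ K, a y = a x + ∑ y ∈ K.erase x, a y :=
      (Finset.add_sum_erase _ _ hxK).symm
    have h2 : ∑ y ∈ K, a y = a e + ∑ y ∈ I, a y := by
      rw [hKI, Finset.sum_insert heI]
    have : a x + ∑ y ∈ I, a y = a e + ∑ y ∈ I, a y := by rw [← hs] at h1; linarith
    linarith
  refine ⟨a e, key, K, hK, hIK, by omega, ?_⟩
  intro x hx
  rw [hKI] at hx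
  rcases Finset.mem_insert.1 hx with rfl | hx
  · rfl
  · exact key x hx

lemma FinMatroid.const_of_lt (M : FinMatroid α) {k : ℕ} (hk0 : 0 < k)
    (hkk : k < M.r Finset.univ) (a : α → ℝ)
    (hsum : ∀ I J : Finset α, M.Indep I → I.card = k → M.Indep J → J.card = k →
      ∑ e ∈ I, a e = ∑ e ∈ J, a e) :
    ∀ e f : α, a e = a f := by
  rcases Nat.eq_or_lt_of_le hk0 with hk1 | hk2
  · -- k = 1 : all singletons independent
    intro e f
    have := hsum {e} {f} (M.loopless e) (by simp [← hk1]) (M.loopless f) (by simp [← hk1])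
    simpa using this
  -- k ≥ 2
  have cross : ∀ n : ℕ, ∀ I I' : Finset α, (I \ I').card = n →
      M.Indep I → I.card = k → M.Indep I' → I'.card = k →
      ∀ e ∈ I, ∀ f ∈ I', a e = a f := by
    intro n
    induction n using Nat.strong_induction_on with
    | _ n ih =>
      intro I I' hn hI hIc hI' hI'c e he f hf
      rcases Nat.eq_zero_or_pos n with rfl | hpos
      · have hsub : I ⊆ I' := by
          rw [← Finset.sdiff_eq_empty_iff_subset]
          exact Finset.card_eq_zero.1 hn
        have : I = I' := Finset.eq_of_subset_of_card_le hsub (by omega)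
        subst this
        obtain ⟨v, hv, -⟩ := M.const_within hkk a hsum hI hIc
        rw [hv e he, hv f hf]
      · obtain ⟨x, hx⟩ : (I \ I').Nonempty := Finset.card_pos.1 (by omega)
        rw [Finset.mem_sdiff] at hx
        have hIx : M.Indep (I.erase x) := M.subset_indep hI (Finset.erase_subset _ _)
        have hIxc : (I.erase x).card = k - 1 := by
          rw [Finset.card_erase_of_mem hx.1]; omega
        obtain ⟨y, hy, hins⟩ := M.exchange hIx hI' (by omega)
        rw [Finset.mem_sdiff] at hy
        set I'' := insert y (I.erase x) with hI''
        have hI''c : I''.card = k := by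
          rw [hI'', Finset.card_insert_of_notMem hy.2]; omega
        have hmeas : (I'' \ I').card < n := by
          have hsub : I'' \ I' ⊆ (I \ I').erase x := by
            intro z hz
            simp only [hI'', Finset.mem_sdiff, Finset.mem_insert, Finset.mem_erase] at hz ⊢
            rcases hz.1 with rfl | hz1
            · exact absurd hy.1 hz.2
            · exact ⟨hz1.1, hz1.2, hz.2⟩
          calc (I'' \ I').card ≤ ((I \ I').erase x).card := Finset.card_le_card hsub
            _ = n - 1 := by rw [Finset.card_erase_of_mem (Finset.mem_sdiff.2 hx), hn]
            _ < n := by omega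
        obtain ⟨z, hz⟩ : (I.erase x).Nonempty := Finset.card_pos.1 (by omega)
        have hzI : z ∈ I := Finset.mem_of_mem_erase hz
        have hzI'' : z ∈ I'' := Finset.mem_insert_of_mem hz
        obtain ⟨v, hv, -⟩ := M.const_within hkk a hsum hI hIc
        have h1 : a e = a z := by rw [hv e he, hv z hzI]
        have h2 : a z = a f := ih _ hmeas I'' I' rfl hins hI''c hI' hI'c z hzI'' f hf
        rw [h1, h2]
  intro e f
  obtain ⟨Ie, hIe, hIes, hIec⟩ := M.extend_card (k := k) (I := {e}) (M.loopless e) (by simp; omega) (by omega)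
  obtain ⟨If, hIf, hIfs, hIfc⟩ := M.extend_card (k := k) (I := {f}) (M.loopless f) (by simp; omega) (by omega)
  exact cross _ Ie If rfl hIe hIec hIf hIfc e (hIes (by simp)) f (hIfs (by simp))

lemma FinMatroid.const_of_insep (M : FinMatroid α) (hins : M.Inseparable Finset.univ)
    {k : ℕ} (hk : k = M.r Finset.univ) (a : α → ℝ)
    (hsum : ∀ I J : Finset α, M.Indep I → I.card = k → M.Indep J → J.card = k →
      ∑ e ∈ I, a e = ∑ e ∈ J, a e) :
    ∀ e f : α, a e = a f := by
  classical
  by_contra hcon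
  push_neg at hcon
  obtain ⟨e, f, hef⟩ := hcon
  have huniv : (Finset.univ : Finset α).Nonempty := ⟨e, Finset.mem_univ e⟩
  obtain ⟨e₀, -, he₀⟩ := Finset.exists_max_image Finset.univ a huniv
  set m := a e₀ with hm
  set F₁ : Finset α := Finset.univ.filter (fun x => a x = m) with hF₁
  set F₂ : Finset α := Finset.univ.filter (fun x => a x ≠ m) with hF₂
  have hmemF₁ : ∀ x, x ∈ F₁ ↔ a x = m := by intro x; simp [hF₁]
  have hmemF₂ : ∀ x, x ∈ F₂ ↔ a x ≠ m := by intro x; simp [hF₂]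
  have hF₁ne : F₁ ≠ ∅ := by
    intro h
    have : e₀ ∈ F₁ := (hmemF₁ e₀).2 rfl
    simp [h] at this
  have hF₂ne : F₂ ≠ ∅ := by
    have : a e ≠ m ∨ a f ≠ m := by
      by_contra h; push_neg at h; rw [h.1, h.2] at hef; exact hef rfl
    intro h
    rcases this with h' | h'
    · have : e ∈ F₂ := (hmemF₂ e).2 h'; simp [h] at this
    · have : f ∈ F₂ := (hmemF₂ f).2 h'; simp [h] at this
  have hdisj : Disjoint F₁ F₂ := by
    rw [Finset.disjoint_left]
    intro x h1 h2
    exact (hmemF₂ x).1 h2 ((hmemF₁ x).1 h1)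
  have hunion : F₁ ∪ F₂ = Finset.univ := by
    ext x
    simp only [Finset.mem_union, hmemF₁, hmemF₂, Finset.mem_univ, iff_true]
    tauto
  -- build a basis B containing a maximal independent subset of F₁
  obtain ⟨I₁, hI₁F, hI₁, hI₁c⟩ := M.exists_indep_r F₁
  have hI₁le : I₁.card ≤ M.r Finset.univ := M.card_le_r_s8 (Finset.subset_univ _) hI₁
  obtain ⟨B, hB, hI₁B, hBc⟩ := M.extend_card (k := M.r Finset.univ) hI₁ hI₁le le_rfl
  have hrF₁pos : 1 ≤ M.r F₁ := by
    have : ({e₀} : Finset α) ⊆ F₁ := by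
      simp only [Finset.singleton_subset_iff]; exact (hmemF₁ e₀).2 rfl
    have := M.card_le_r_s8 this (M.loopless e₀)
    simpa using this
  have hBF₁ : (B ∩ F₁).card = M.r F₁ := by
    have hle : (B ∩ F₁).card ≤ M.r F₁ :=
      M.card_le_r_s8 Finset.inter_subset_right (M.subset_indep hB Finset.inter_subset_left)
    have hsub : I₁ ⊆ B ∩ F₁ := Finset.subset_inter hI₁B hI₁F
    have := Finset.card_le_card hsub
    omega
  have hBF₂ : (B ∩ F₂).card = M.r F₂ := by
    have hle : (B ∩ F₂).card ≤ M.r F₂ :=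
      M.card_le_r_s8 Finset.inter_subset_right (M.subset_indep hB Finset.inter_subset_left)
    by_contra hlt
    obtain ⟨J, hJF, hJ, hJc⟩ := M.exists_indep_r F₂
    obtain ⟨g, hg, hins2⟩ := M.exchange (I := B ∩ F₂) (M.subset_indep hB Finset.inter_subset_left) hJ
      (by omega)
    rw [Finset.mem_sdiff] at hg
    have hgF₂ : g ∈ F₂ := hJF hg.1
    have hgB : g ∉ B := by
      intro h
      exact hg.2 (Finset.mem_inter.2 ⟨h, hgF₂⟩)
    -- B ∩ F₁ nonempty ⇒ B ∩ F₂ strict subset of B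
    have hBF₁sub : B ∩ F₁ ⊆ B := Finset.inter_subset_left
    have hcardsplit : (B ∩ F₁).card + (B ∩ F₂).card = B.card := by
      rw [← Finset.card_union_of_disjoint
        (Finset.disjoint_of_subset_left Finset.inter_subset_right
          (Finset.disjoint_of_subset_right Finset.inter_subset_right hdisj))]
      congr 1
      rw [← Finset.inter_union_distrib_left, hunion, Finset.inter_univ]
    have hKc : (insert g (B ∩ F₂)).card = (B ∩ F₂).card + 1 :=
      Finset.card_insert_of_notMem hg.2
    have hKleB : (insert g (B ∩ F₂)).card ≤ B.card := by omega
    obtain ⟨B', hB', hKB', hB'sub, hB'c⟩ := M.extend hins2 hB hKleB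
    have hgB' : g ∈ B' := hKB' (Finset.mem_insert_self _ _)
    have hB'insert : B' ⊆ insert g B := by
      intro x hx
      rcases Finset.mem_union.1 (hB'sub hx) with hx' | hx'
      · rcases Finset.mem_insert.1 hx' with rfl | hx''
        · exact Finset.mem_insert_self _ _
        · exact Finset.mem_insert_of_mem (Finset.inter_subset_left hx'')
      · exact Finset.mem_insert_of_mem hx'
    -- find y ∈ B \ B'
    obtain ⟨y, hy⟩ : (B \ B').Nonempty := by
      rw [Finset.sdiff_nonempty]
      intro hsub2
      have : B = B' := Finset.eq_of_subset_of_card_le hsub2 (by omega)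
      rw [← this] at hgB'
      exact hgB hgB'
    rw [Finset.mem_sdiff] at hy
    -- B' = insert g (B.erase y)
    have hB'eq : B' = insert g (B.erase y) := by
      apply Finset.eq_of_subset_of_card_le
      · intro x hx
        rcases Finset.mem_insert.1 (hB'insert hx) with rfl | hx'
        · exact Finset.mem_insert_self _ _
        · refine Finset.mem_insert_of_mem (Finset.mem_erase.2 ⟨?_, hx'⟩)
          rintro rfl; exact hy.2 hx
      · rw [Finset.card_insert_of_notMem (fun h => hgB (Finset.mem_of_mem_erase h)),
          Finset.card_erase_of_mem hy.1]
        have hBpos : 1 ≤ B.card := by omega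
        omega
    -- sums: a y = a g
    have hsumBB' := hsum B B' hB (by omega) hB' (by omega)
    have hsB' : ∑ x ∈ B', a x = a g + (∑ x ∈ B, a x - a y) := by
      rw [hB'eq, Finset.sum_insert (fun h => hgB (Finset.mem_of_mem_erase h)),
        Finset.sum_erase_eq_sub hy.1]
    have hay : a y = a g := by rw [← hsumBB'] at hsB'; linarith
    have hyF₂ : y ∈ F₂ := (hmemF₂ y).2 (by rw [hay]; exact (hmemF₂ g).1 hgF₂)
    exact hy.2 (hKB' (Finset.mem_insert_of_mem (Finset.mem_inter.2 ⟨hy.1, hyF₂⟩)))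
  -- separability
  apply hins
  refine ⟨F₁, F₂, hF₁ne, hF₂ne, hdisj, hunion, ?_⟩
  have hcardsplit : (B ∩ F₁).card + (B ∩ F₂).card = B.card := by
    rw [← Finset.card_union_of_disjoint
      (Finset.disjoint_of_subset_left Finset.inter_subset_right
        (Finset.disjoint_of_subset_right Finset.inter_subset_right hdisj))]
    congr 1
    rw [← Finset.inter_union_distrib_left, hunion, Finset.inter_univ]
  omega

lemma FinMatroid.not_const_of_sep (M : FinMatroid α) (hsep : M.Separable Finset.univ)
    {k : ℕ} (hk : k = M.r Finset.univ) :
    ∃ a : α → ℝ, (∀ I J : Finset α, M.Indep I → I.card = k → M.Indep J → J.card = k →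
      ∑ e ∈ I, a e = ∑ e ∈ J, a e) ∧ ∃ e f : α, a e ≠ a f := by
  classical
  obtain ⟨F₁, F₂, h1ne, h2ne, hdisj, hunion, hrle⟩ := hsep
  refine ⟨fun x => if x ∈ F₁ then (1:ℝ) else 0, ?_, ?_⟩
  · have key : ∀ I : Finset α, M.Indep I → I.card = k →
        ∑ e ∈ I, (if e ∈ F₁ then (1:ℝ) else 0) = (M.r F₁ : ℝ) := by
      intro I hI hIc
      have hs : ∑ e ∈ I, (if e ∈ F₁ then (1:ℝ) else 0) = ((I ∩ F₁).card : ℝ) := by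
        rw [Finset.sum_ite_mem, Finset.sum_const, nsmul_eq_mul, mul_one]
      have hle1 : (I ∩ F₁).card ≤ M.r F₁ :=
        M.card_le_r_s8 Finset.inter_subset_right (M.subset_indep hI Finset.inter_subset_left)
      have hle2 : (I ∩ F₂).card ≤ M.r F₂ :=
        M.card_le_r_s8 Finset.inter_subset_right (M.subset_indep hI Finset.inter_subset_left)
      have hsplit : (I ∩ F₁).card + (I ∩ F₂).card = I.card := by
        rw [← Finset.card_union_of_disjoint
          (Finset.disjoint_of_subset_left Finset.inter_subset_right
            (Finset.disjoint_of_subset_right Finset.inter_subset_right hdisj))]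
        congr 1
        rw [← Finset.inter_union_distrib_left, hunion, Finset.inter_univ]
      have : (I ∩ F₁).card = M.r F₁ := by omega
      rw [hs, this]
    intro I J hI hIc hJ hJc
    rw [key I hI hIc, key J hJ hJc]
  · obtain ⟨e, he⟩ := Finset.nonempty_iff_ne_empty.2 h1ne
    obtain ⟨f, hf⟩ := Finset.nonempty_iff_ne_empty.2 h2ne
    have hfF₁ : f ∉ F₁ := Finset.disjoint_right.1 hdisj hf
    exact ⟨e, f, by simp [he, hfF₁]⟩

/-- dimension of P^(k)(E). -/
theorem exactPolytope_dim_iff {α : Type*} [Fintype α] [DecidableEq α]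
    (M : FinMatroid α) (k : ℕ) (hk0 : 0 < k) (hkr : k ≤ M.r Finset.univ) :
    polyDim (exactPolytope M k) + 1 = Fintype.card α ↔
      (M.Inseparable Finset.univ ∨ k < M.r Finset.univ) := by
  classical
  set S : Set (α → ℝ) := {x | ∃ I : Finset α, M.Indep I ∧ I.card = k ∧ x = incVec I} with hS
  have hdim : polyDim (exactPolytope M k) = Module.finrank ℝ (vectorSpan ℝ S) := by
    unfold polyDim exactPolytope
    rw [affineSpan_convexHull, direction_affineSpan]
  -- α is nonempty
  obtain ⟨I₀, hI₀, hI₀c⟩ := M.exists_indep_card hkr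
  obtain ⟨e₀, he₀⟩ : I₀.Nonempty := Finset.card_pos.1 (by omega)
  haveI : Nonempty α := ⟨e₀⟩
  -- the sum functional
  set σ : (α → ℝ) →ₗ[ℝ] ℝ := ∑ e : α, LinearMap.proj e with hσdef
  have hσ : ∀ x : α → ℝ, σ x = ∑ e, x e := by
    intro x; simp [hσdef]
  have hσ_inc : ∀ I : Finset α, σ (incVec I) = I.card := by
    intro I
    rw [hσ]
    simp [incVec, Finset.sum_ite_mem]
  set H₀ := LinearMap.ker σ with hH₀def
  have hW_le : vectorSpan ℝ S ≤ H₀ := by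
    rw [vectorSpan_def, Submodule.span_le]
    rintro v ⟨x, hx, y, hy, rfl⟩
    obtain ⟨I, hI, hIc, rfl⟩ := hx
    obtain ⟨J, hJ, hJc, rfl⟩ := hy
    simp only [SetLike.mem_coe, hH₀def, LinearMap.mem_ker, vsub_eq_sub, map_sub, hσ_inc,
      hIc, hJc, sub_self]
  have hσ_ne : σ ≠ 0 := by
    intro h
    have h1 : σ (fun _ => (1:ℝ)) = 0 := by rw [h]; rfl
    rw [hσ] at h1
    simp at h1
  have hH₀rank : Module.finrank ℝ H₀ + 1 = Fintype.card α := by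
    rw [hH₀def, Module.Dual.finrank_ker_add_one_of_ne_zero hσ_ne,
      Module.finrank_fintype_fun_eq_card]
  -- the functional attached to a : α → ℝ
  have hφ_inc : ∀ (a : α → ℝ) (I : Finset α),
      (∑ e : α, a e • LinearMap.proj (R := ℝ) (φ := fun _ : α => ℝ) e) (incVec I)
        = ∑ e ∈ I, a e := by
    intro a I
    simp [incVec, mul_ite, Finset.sum_ite_mem]
  rw [hdim]
  constructor
  · -- dimension n-1 implies inseparable or k < r
    intro h
    by_contra hcon
    push_neg at hcon
    obtain ⟨hsep', hge⟩ := hcon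
    have hsep : M.Separable Finset.univ := not_not.1 hsep'
    have hkeq : k = M.r Finset.univ := by omega
    obtain ⟨a, hsum, e, f, hef⟩ := M.not_const_of_sep hsep hkeq
    set φ : (α → ℝ) →ₗ[ℝ] ℝ := ∑ e : α, a e • LinearMap.proj e with hφdef
    have hWH : vectorSpan ℝ S = H₀ :=
      Submodule.eq_of_le_of_finrank_eq hW_le (by omega)
    have hker : H₀ ≤ LinearMap.ker φ := by
      rw [← hWH, vectorSpan_def, Submodule.span_le]
      rintro v ⟨x, hx, y, hy, rfl⟩
      obtain ⟨I, hI, hIc, rfl⟩ := hx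
      obtain ⟨J, hJ, hJc, rfl⟩ := hy
      simp only [SetLike.mem_coe, LinearMap.mem_ker, vsub_eq_sub, map_sub, hφdef, hφ_inc,
        hsum I J hI hIc hJ hJc, sub_self]
    have hne : e ≠ f := fun h' => hef (by rw [h'])
    set v : α → ℝ := Pi.single e 1 - Pi.single f 1 with hv
    have hvH₀ : v ∈ H₀ := by
      simp only [hH₀def, LinearMap.mem_ker, hv, map_sub, hσ]
      simp [Pi.single_apply]
    have hφv : φ v = a e - a f := by
      simp only [hφdef, hv, map_sub]
      simp [Pi.single_apply, mul_ite]
    have := hker hvH₀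
    rw [LinearMap.mem_ker, hφv, sub_eq_zero] at this
    exact hef this
  · -- inseparable or k < r implies dimension n-1
    intro h
    have hAcond : ∀ a : α → ℝ,
        (∀ I J : Finset α, M.Indep I → I.card = k → M.Indep J → J.card = k →
          ∑ e ∈ I, a e = ∑ e ∈ J, a e) → ∀ e f : α, a e = a f := by
      intro a hsum
      by_cases hlt : k < M.r Finset.univ
      · exact M.const_of_lt hk0 hlt a hsum
      · have hkeq : k = M.r Finset.univ := by omega
        rcases h with hins | hlt'
        · exact M.const_of_insep hins hkeq a hsum
        · omega
    have hWH : vectorSpan ℝ S = H₀ := by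
      by_contra hne
      have hlt : vectorSpan ℝ S < H₀ := lt_of_le_of_ne hW_le hne
      obtain ⟨x, hxH, hxW⟩ := SetLike.exists_of_lt hlt
      obtain ⟨φ, hφx, hφW⟩ :=
        Submodule.exists_dual_map_eq_bot_of_notMem (p := vectorSpan ℝ S) hxW inferInstance
      have hφ0 : ∀ w ∈ vectorSpan ℝ S, φ w = 0 := by
        intro w hw
        have : φ w ∈ (vectorSpan ℝ S).map φ := Submodule.mem_map_of_mem hw
        rw [hφW, Submodule.mem_bot] at this
        exact this
      set a : α → ℝ := fun e => φ (fun j => if e = j then 1 else 0) with ha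
      have hφ_eq : ∀ y : α → ℝ, φ y = ∑ e, y e * a e := by
        intro y
        conv_lhs => rw [pi_eq_sum_univ y]
        rw [map_sum]
        refine Finset.sum_congr rfl fun i _ => ?_
        rw [map_smul, smul_eq_mul, ha]
      have hφinc : ∀ I : Finset α, φ (incVec I) = ∑ e ∈ I, a e := by
        intro I
        rw [hφ_eq]
        simp [incVec, ite_mul, Finset.sum_ite_mem]
      have hsum : ∀ I J : Finset α, M.Indep I → I.card = k → M.Indep J → J.card = k →
          ∑ e ∈ I, a e = ∑ e ∈ J, a e := by
        intro I J hI hIc hJ hJc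
        have hmem : incVec I -ᵥ incVec J ∈ vectorSpan ℝ S := by
          rw [vectorSpan_def]
          exact Submodule.subset_span ⟨incVec I, ⟨I, hI, hIc, rfl⟩, incVec J, ⟨J, hJ, hJc, rfl⟩, rfl⟩
        have := hφ0 _ hmem
        rw [vsub_eq_sub, map_sub, sub_eq_zero, hφinc, hφinc] at this
        exact this
      have hconst := hAcond a hsum
      have : φ x = a e₀ * σ x := by
        rw [hφ_eq, hσ, Finset.mul_sum]
        refine Finset.sum_congr rfl fun i _ => ?_
        rw [hconst i e₀, mul_comm]
      rw [LinearMap.mem_ker.1 hxH, mul_zero] at this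
      exact hφx this
    rw [hWH]
    exact hH₀rank
end
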